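/- For every n ≥ 1, substituting y = z in Q_n gives the complete factorization Q_n(x, z, z, t) = ∏_{k=1}^{n−1} (x + n·z + k·t). -/

import Mathlib

open MvPolynomial

/-- The Chapoton polynomials `Q n`, defined by `Q 1 = 1` and
`Q (n+1) = [x + n z + (y + t)(n + y ∂_y)] Q n`, where the variables
`x, y, z, t` are `X 0, X 1, X 2, X 3` respectively. -/
noncomputable def ChapotonQ : ℕ → MvPolynomial (Fin 4) ℤ
  | 0 => 1
  | 1 => 1
  | (n + 2) =>
      (X 0 + ((n : MvPolynomial (Fin 4) ℤ) + 1) * X 2) * ChapotonQ (n + 1) +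
        (X 1 + X 3) * (((n : MvPolynomial (Fin 4) ℤ) + 1) * ChapotonQ (n + 1) +
          X 1 * pderiv 1 (ChapotonQ (n + 1)))

noncomputable def sig : MvPolynomial (Fin 4) ℤ →ₐ[ℤ] MvPolynomial (Fin 4) ℤ :=
  aeval ![X 0 + X 2, X 1, X 2, X 3]

lemma sig_X0 : sig (X 0) = X 0 + X 2 := by simp [sig]
lemma sig_X1 : sig (X 1) = X 1 := by simp [sig]
lemma sig_X2 : sig (X 2) = X 2 := by simp [sig]
lemma sig_X3 : sig (X 3) = X 3 := by simp [sig]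

lemma pderiv_sig (p : MvPolynomial (Fin 4) ℤ) :
    pderiv 1 (sig p) = sig (pderiv 1 p) := by
  induction p using MvPolynomial.induction_on with
  | C a => simp [sig]
  | add p q hp hq => simp [map_add, hp, hq]
  | mul_X p i hp =>
      have hXi : pderiv 1 (sig (X i)) = sig (pderiv 1 (X i)) := by
        fin_cases i <;> simp [sig, pderiv_X, Pi.single_apply]
      rw [map_mul, pderiv_mul, hp, pderiv_mul, map_add, map_mul, map_mul, hXi]

lemma sig_natCast (n : ℕ) : sig (n : MvPolynomial (Fin 4) ℤ) = n := map_natCast _ n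

lemma pderiv_natCast' (n : ℕ) :
    pderiv (1 : Fin 4) ((n : MvPolynomial (Fin 4) ℤ)) = 0 := by
  simp

abbrev MP := MvPolynomial (Fin 4) ℤ

lemma chapoton_key (n : ℕ) :
    ChapotonQ (n + 2) =
      (X 0 + ((n : MP) + 2) * X 2 + ((n : MP) + 1) * X 3) * sig (ChapotonQ (n + 1)) +
        (X 1 - X 2) * (((n : MP) + 1) * sig (ChapotonQ (n + 1)) +
          (X 1 + X 3) * pderiv 1 (sig (ChapotonQ (n + 1)))) := by
  induction n with
  | zero =>
      have h1 : ChapotonQ 1 = 1 := rfl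
      have h2 : ChapotonQ 2 = (X 0 + (((0:ℕ) : MP) + 1) * X 2) * ChapotonQ 1 +
          (X 1 + X 3) * ((((0:ℕ) : MP) + 1) * ChapotonQ 1 +
            X 1 * pderiv 1 (ChapotonQ 1)) := rfl
      rw [h2, h1]
      simp only [map_one, Derivation.map_one_eq_zero, Nat.cast_zero, mul_zero, add_zero,
        mul_one, zero_add]
      ring
  | succ n ih =>
      obtain ⟨A, hA⟩ : ∃ A : MP, A = sig (ChapotonQ (n + 1)) := ⟨_, rfl⟩
      obtain ⟨A', hA'⟩ : ∃ B : MP, B = pderiv 1 A := ⟨_, rfl⟩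
      obtain ⟨A'', hA''⟩ : ∃ B : MP, B = pderiv 1 A' := ⟨_, rfl⟩
      rw [← hA, ← hA'] at ih
      -- ih : ChapotonQ (n+2) = (X0 + (n+2)X2 + (n+1)X3)*A + (X1-X2)*((n+1)A + (X1+X3)A')
      have ih' : ChapotonQ (n + 2) =
          (X 0 + ((n + 2 : ℕ) : MP) * X 2 + ((n + 1 : ℕ) : MP) * X 3) * A +
            (X 1 - X 2) * (((n + 1 : ℕ) : MP) * A + (X 1 + X 3) * A') := by
        rw [ih]; push_cast; ring
      have hder : pderiv 1 (ChapotonQ (n + 2)) =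
          (X 0 + ((n + 2 : ℕ) : MP) * X 2 + ((n + 1 : ℕ) : MP) * X 3) * A' +
            (((n + 1 : ℕ) : MP) * A + (X 1 + X 3) * A') +
            (X 1 - X 2) * (((n + 1 : ℕ) : MP) * A' + A' + (X 1 + X 3) * A'') := by
        rw [ih']
        simp only [map_add, map_sub, pderiv_mul, pderiv_natCast', pderiv_X, ← hA', ← hA'',
          Pi.single_apply]
        simp (config := { decide := true }) only [reduceIte, Nat.cast_ofNat]
        ring
      have hd2 : ChapotonQ (n + 2) =
          (X 0 + ((n : MP) + 1) * X 2) * ChapotonQ (n + 1) +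
            (X 1 + X 3) * (((n : MP) + 1) * ChapotonQ (n + 1) +
              X 1 * pderiv 1 (ChapotonQ (n + 1))) := rfl
      have hsig : sig (ChapotonQ (n + 2)) =
          (X 0 + ((n + 2 : ℕ) : MP) * X 2) * A +
            (X 1 + X 3) * (((n + 1 : ℕ) : MP) * A + X 1 * A') := by
        rw [hd2]
        simp only [map_add, map_mul, map_natCast, map_one, sig_X0, sig_X1, sig_X2, sig_X3,
          ← pderiv_sig, ← hA, ← hA']
        push_cast
        ring
      have hsigder : pderiv 1 (sig (ChapotonQ (n + 2))) =
          (X 0 + ((n + 2 : ℕ) : MP) * X 2) * A' +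
            (((n + 1 : ℕ) : MP) * A + X 1 * A') +
            (X 1 + X 3) * (((n + 1 : ℕ) : MP) * A' + A' + X 1 * A'') := by
        rw [hsig]
        simp only [map_add, pderiv_mul, pderiv_natCast', pderiv_X, ← hA', ← hA'',
          Pi.single_apply]
        simp (config := { decide := true }) only [reduceIte, Nat.cast_ofNat]
        ring
      have hd3 : ChapotonQ (n + 1 + 2) =
          (X 0 + (((n + 1 : ℕ)) : MP) * X 2 + X 2) * ChapotonQ (n + 2) +
            (X 1 + X 3) * (((((n + 1 : ℕ)) : MP) + 1) * ChapotonQ (n + 2) +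
              X 1 * pderiv 1 (ChapotonQ (n + 2))) := by
        show (X 0 + (((n + 1 : ℕ) : MP) + 1) * X 2) * ChapotonQ (n + 2) +
            (X 1 + X 3) * ((((n + 1 : ℕ) : MP) + 1) * ChapotonQ (n + 2) +
              X 1 * pderiv 1 (ChapotonQ (n + 2))) = _
        ring
      rw [show n + 1 + 1 = n + 2 from rfl, hd3, hder, hsigder, hsig, ih']
      push_cast
      ring

lemma ev_sig (p : MvPolynomial (Fin 4) ℤ) :
    aeval ![X 0, X 2, X 2, X 3] (sig p) = sig (aeval ![X 0, X 2, X 2, X 3] p) := by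
  have h : (aeval (R := ℤ) ![X 0, X 2, X 2, (X 3 : MP)]).comp sig =
      sig.comp (aeval ![X 0, X 2, X 2, X 3]) := by
    apply MvPolynomial.algHom_ext
    intro i
    fin_cases i <;> simp [sig]
  exact congrArg (fun f => f p) (congrArg DFunLike.coe h)


/-- Substituting `y = z` gives `Q_n(x,z,z,t) = ∏_{k=1}^{n-1} (x + n z + k t)`. -/
theorem chapotonQ_y_eq_z (n : ℕ) (hn : 1 ≤ n) :
    aeval ![X 0, X 2, X 2, X 3] (ChapotonQ n) =
      ∏ k ∈ Finset.Icc 1 (n - 1),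
        (X 0 + (n : MvPolynomial (Fin 4) ℤ) * X 2 + (k : MvPolynomial (Fin 4) ℤ) * X 3) := by
  induction n with
  | zero => exact absurd hn (by norm_num)
  | succ m ih =>
    cases m with
    | zero =>
        have h1 : ChapotonQ 1 = 1 := rfl
        simp [h1]
    | succ m' =>
        have ih' : aeval ![X 0, X 2, X 2, (X 3 : MP)] (ChapotonQ (m' + 1)) =
            ∏ k ∈ Finset.Icc 1 m',
              (X 0 + ((m' + 1 : ℕ) : MP) * X 2 + (k : MP) * X 3) := by
          have := ih (Nat.le_add_left 1 m')
          simpa using this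
        have hk := chapoton_key m'
        rw [show m' + 1 + 1 = m' + 2 from rfl, hk]
        have hz : aeval ![X 0, X 2, X 2, (X 3 : MP)] (X 1 - X 2 : MP) = 0 := by
          simp
        rw [map_add, map_mul, map_mul, hz, zero_mul, add_zero]
        rw [ev_sig, ih', map_prod]
        have hhead : aeval ![X 0, X 2, X 2, (X 3 : MP)]
            (X 0 + ((m' : MP) + 2) * X 2 + ((m' : MP) + 1) * X 3) =
            X 0 + ((m' + 2 : ℕ) : MP) * X 2 + ((m' + 1 : ℕ) : MP) * X 3 := by
          simp only [map_add, map_mul, map_natCast, map_ofNat, map_one, aeval_X]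
          simp only [Matrix.cons_val_zero, Matrix.cons_val_one, Matrix.head_cons,
            Matrix.cons_val_two, Matrix.tail_cons, Matrix.cons_val_three]
          push_cast
          ring
        rw [hhead]
        have hfac : ∀ k ∈ Finset.Icc 1 m',
            sig (X 0 + ((m' + 1 : ℕ) : MP) * X 2 + (k : MP) * X 3) =
            X 0 + ((m' + 2 : ℕ) : MP) * X 2 + (k : MP) * X 3 := by
          intro k _
          simp only [map_add, map_mul, map_natCast, sig_X0, sig_X2, sig_X3]
          push_cast
          ring
        rw [Finset.prod_congr rfl hfac]
        have htop := Finset.prod_Icc_succ_top (f := fun k =>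
            (X 0 + ((m' + 2 : ℕ) : MP) * X 2 + (k : MP) * X 3)) (Nat.le_add_left 1 m')
        have hgoal : ∏ k ∈ Finset.Icc 1 (m' + 1 + 1 - 1),
            (X 0 + ((m' + 1 + 1 : ℕ) : MP) * X 2 + (k : MP) * X 3) =
            ∏ k ∈ Finset.Icc 1 (m' + 1),
            (X 0 + ((m' + 2 : ℕ) : MP) * X 2 + (k : MP) * X 3) := rfl
        rw [hgoal, htop]
        push_cast
        ring
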